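/- For positive δ, satisfaction of a δ-labelled τ-path reduces to reachability plus endpoint satisfaction: if δ is positive then p ↠^δ_τ p' (a τ-path along which every state satisfies δ) holds if and only if p ↠_τ p' and p' ⊨ δ. -/

import Mathlib

variable {X A : Type*}

/-- Formulas of Hennessy-Milner Logic with Until. `none` is the silent action τ. -/
inductive HMLU (A : Type*) where
  | top : HMLU A
  | neg : HMLU A → HMLU A
  | and : HMLU A → HMLU A → HMLU A
  | dia : HMLU A → Option A → HMLU A → HMLU A

/-- Satisfaction: `p ⊨ δ⟨α⟩ψ` iff there is a τ-path from `p` along which every state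
satisfies `δ`, ending in a state that `α`-steps to a state satisfying `ψ`. -/
def Sat (step : Option A → X → X → Prop) : HMLU A → X → Prop
  | .top, _ => True
  | .neg φ, p => ¬ Sat step φ p
  | .and φ ψ, p => Sat step φ p ∧ Sat step ψ p
  | .dia δ α ψ, p => ∃ p' p'', Sat step δ p ∧
      Relation.ReflTransGen (fun x y => step none x y ∧ Sat step δ y) p p' ∧
      step α p' p'' ∧ Sat step ψ p''

mutual
  /-- Positive HMLU formulas. -/
  inductive Positive : HMLU A → Prop
    | top : Positive .top
    | neg {φ : HMLU A} : Negative φ → Positive (.neg φ)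
    | and {φ ψ : HMLU A} : Positive φ → Positive ψ → Positive (.and φ ψ)
    | dia {δ ψ : HMLU A} {α : Option A} : Positive δ → Positive (.dia δ α ψ)
  /-- Negative HMLU formulas. -/
  inductive Negative : HMLU A → Prop
    | top : Negative .top
    | neg {φ : HMLU A} : Positive φ → Negative (.neg φ)
    | and {φ ψ : HMLU A} : Negative φ → Negative ψ → Negative (.and φ ψ)
end

/-- Good formulas: every diamond subformula has a positive left-hand side. -/
inductive Good : HMLU A → Prop
  | top : Good .top
  | neg {φ : HMLU A} : Good φ → Good (.neg φ)
  | and {φ ψ : HMLU A} : Good φ → Good ψ → Good (.and φ ψ)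
  | dia {δ ψ : HMLU A} {α : Option A} : Positive δ → Good δ → Good ψ → Good (.dia δ α ψ)

/-- `p ↠^δ_τ p'`: a τ-path from `p` to `p'` along which every state satisfies `δ`. -/
def DPath (step : Option A → X → X → Prop) (δ : HMLU A) (p p' : X) : Prop :=
  Sat step δ p ∧ Relation.ReflTransGen (fun x y => step none x y ∧ Sat step δ y) p p'

section
variable {X A : Type*}

lemma sat_mono (step : Option A → X → X → Prop) :
    ∀ φ : HMLU A,
      (Positive φ → ∀ p q, step none p q → Sat step φ q → Sat step φ p) ∧
      (Negative φ → ∀ p q, step none p q → Sat step φ p → Sat step φ q) := by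
  intro φ
  induction φ with
  | top => exact ⟨fun _ _ _ _ _ => trivial, fun _ _ _ _ _ => trivial⟩
  | neg φ ih =>
    constructor
    · rintro hpos p q hs hq hp
      cases hpos with
      | neg hneg => exact hq (ih.2 hneg p q hs hp)
    · rintro hneg p q hs hp hq
      cases hneg with
      | neg hpos => exact hp (ih.1 hpos p q hs hq)
  | and φ ψ ihφ ihψ =>
    constructor
    · rintro hpos p q hs ⟨h1, h2⟩
      cases hpos with
      | and h1' h2' => exact ⟨ihφ.1 h1' p q hs h1, ihψ.1 h2' p q hs h2⟩
    · rintro hneg p q hs ⟨h1, h2⟩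
      cases hneg with
      | and h1' h2' => exact ⟨ihφ.2 h1' p q hs h1, ihψ.2 h2' p q hs h2⟩
  | dia δ α ψ ihδ ihψ =>
    constructor
    · rintro hpos p q hs ⟨p1, p2, hδq, hpath, hα, hψ⟩
      cases hpos with
      | dia hδpos =>
        refine ⟨p1, p2, ihδ.1 hδpos p q hs hδq, ?_, hα, hψ⟩
        exact Relation.ReflTransGen.head ⟨hs, hδq⟩ hpath
    · rintro hneg
      cases hneg

lemma dpath_sat_last (step : Option A → X → X → Prop) (δ : HMLU A) (p p' : X)
    (h : DPath step δ p p') : Sat step δ p' := by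
  obtain ⟨hp, hpath⟩ := h
  induction hpath with
  | refl => exact hp
  | tail _ hstep _ => exact hstep.2

theorem dpath_iff_tauStar_and_sat' (step : Option A → X → X → Prop)
    (htau : ∀ p : X, step none p p) (δ : HMLU A) (hδ : Positive δ) (p p' : X) :
    DPath step δ p p' ↔ Relation.ReflTransGen (step none) p p' ∧ Sat step δ p' := by
  constructor
  · intro h
    exact ⟨Relation.ReflTransGen.mono (fun x y h => h.1) _ _ h.2, dpath_sat_last step δ p p' h⟩
  · rintro ⟨hpath, hsat⟩
    induction hpath using Relation.ReflTransGen.head_induction_on with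
    | refl => exact ⟨hsat, Relation.ReflTransGen.refl⟩
    | head hs _ ih =>
      obtain ⟨hq, hqpath⟩ := ih
      exact ⟨(sat_mono step δ).1 hδ _ _ hs hq, Relation.ReflTransGen.head ⟨hs, hq⟩ hqpath⟩
end
theorem dpath_iff_tauStar_and_sat (step : Option A → X → X → Prop)
    (htau : ∀ p : X, step none p p) (δ : HMLU A) (hδ : Positive δ) (p p' : X) :
    DPath step δ p p' ↔ Relation.ReflTransGen (step none) p p' ∧ Sat step δ p' := by
  exact dpath_iff_tauStar_and_sat' step htau δ hδ p p'
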